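/- arXiv:math/0510079 — 2 statements merged into one kernel-verified Lean document; each statement's English description precedes it below -/
import Mathlib

section
/- Let s = 2, n ≥ 2, and let P = E^a N E^b N Q E^c be a valid path from (0,0) to (nr,2n) where a+b+c = r and E^c is the maximal run of E-steps at the end of P (i.e., the suffix after the last N-step of P is E^c). Then the path Q' = Q + (c,0) is valid and begins with at most r - b east steps. -/
/-- The vector of a step: `true` is an east step `E=(1,0)`, `false` is a north step `N=(0,1)`. -/
def stepVec (b : Bool) : ℤ × ℤ := if b then (1, 0) else (0, 1)

/-- The point of the lattice path reached after the first `i` steps, starting at `start`. -/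
def pathPoint (start : ℤ × ℤ) (steps : List Bool) (i : ℕ) : ℤ × ℤ :=
  start + ((steps.take i).map stepVec).sum

/-- The path with step list `steps` starting at `start` ends at `fin`. -/
def IsPathFrom (start fin : ℤ × ℤ) (steps : List Bool) : Prop :=
  pathPoint start steps steps.length = fin

/-- Validity of a lattice path with respect to the equivalence `v ~ v + ℓ(r,s)`:
whenever the path enters a point `v` with an `E`-step, every later point of the path
in the class of `v` is also entered with an `E`-step. -/
def Valid (r s : ℤ) (start : ℤ × ℤ) (steps : List Bool) : Prop :=
  ∀ i j, i < j → ∀ (hi : i < steps.length) (hj : j < steps.length),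
    (∃ ℓ : ℤ, pathPoint start steps (j + 1) - pathPoint start steps (i + 1) = (ℓ * r, ℓ * s)) →
    steps.get ⟨i, hi⟩ = true → steps.get ⟨j, hj⟩ = true

lemma sum_map_stepVec (l : List Bool) :
    (l.map stepVec).sum = ((l.count true : ℤ), (l.count false : ℤ)) := by
  induction l with
  | nil => simp; rfl
  | cons hd tl ih =>
    cases hd <;> simp [stepVec, ih, List.count_cons, Prod.ext_iff] <;> ring

lemma pathPoint_eq (s : ℤ × ℤ) (l : List Bool) (i : ℕ) :
    pathPoint s l i = (s.1 + ((l.take i).count true : ℤ), s.2 + ((l.take i).count false : ℤ)) := by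
  rw [pathPoint, sum_map_stepVec]; rfl

lemma count_take_mono (l : List Bool) (b : Bool) {i j : ℕ} (h : i ≤ j) :
    (l.take i).count b ≤ (l.take j).count b := by
  have h2 : l.take i = (l.take j).take i := by rw [List.take_take, min_eq_left h]
  rw [h2]
  exact (List.take_sublist _ _).count_le b

lemma exists_false_crossing (l : List Bool) (b : Bool) (i q : ℕ) :
    ∀ j, i ≤ j → j ≤ l.length → (l.take i).count b < q → q ≤ (l.take j).count b →
    ∃ k, i ≤ k ∧ k < j ∧ ∃ hk : k < l.length, l.get ⟨k, hk⟩ = b ∧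
      (l.take k).count b + 1 = q := by
  intro j
  induction j with
  | zero => intro h1 h2 h3 h4; simp at h4; omega
  | succ j ih =>
    intro hij hj h1 h2
    have hjl : j < l.length := hj
    have htk : l.take (j+1) = l.take j ++ [l[j]] := by
      rw [List.take_succ]; simp [List.getElem?_eq_getElem hjl]
    have hc : (l.take (j+1)).count b = (l.take j).count b + if l[j] = b then 1 else 0 := by
      rw [htk, List.count_append]
      by_cases h : l[j] = b <;> simp [List.count_singleton', beq_iff_eq, h]
    by_cases hq : q ≤ (l.take j).count b
    · have hij' : i ≤ j := by
        by_contra h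
        have hii : i = j + 1 := by omega
        subst hii
        omega
      obtain ⟨k, h₁, h₂, h₃⟩ := ih hij' (le_of_lt hjl) h1 hq
      exact ⟨k, h₁, by omega, h₃⟩
    · have hlb : l[j] = b := by
        by_contra h
        simp [h] at hc; omega
      have hij' : i ≤ j := by
        by_contra h
        have hii : i = j + 1 := by omega
        subst hii
        omega
      refine ⟨j, hij', by omega, hjl, ?_, ?_⟩
      · simpa [List.get_eq_getElem] using hlb
      · simp [hlb] at hc; omega

lemma takeWhile_boundary' (p : Bool → Bool) :
    ∀ (l : List Bool) (k : ℕ) (hk : k < l.length), k = (l.takeWhile p).length →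
      p (l.get ⟨k, hk⟩) = false := by
  intro l
  induction l with
  | nil => intro k hk; simp at hk
  | cons hd tl ih =>
    intro k hk hke
    match k with
    | 0 =>
      show p hd = false
      by_cases hp : p hd
      · rw [List.takeWhile_cons_of_pos hp] at hke
        simp only [List.length_cons] at hke; omega
      · simpa using hp
    | k + 1 =>
      show p (tl.get ⟨k, Nat.lt_of_succ_lt_succ hk⟩) = false
      by_cases hp : p hd
      · rw [List.takeWhile_cons_of_pos hp] at hke
        simp only [List.length_cons] at hke
        exact ih k _ (by omega)
      · rw [List.takeWhile_cons_of_neg hp] at hke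
        simp only [List.length_nil] at hke; omega

lemma takeWhile_boundary {p : Bool → Bool} (l : List Bool)
    (h : (l.takeWhile p).length < l.length) :
    p (l.get ⟨(l.takeWhile p).length, h⟩) = false :=
  takeWhile_boundary' p l _ h rfl

lemma get_eq_of_count (l : List Bool) (j : ℕ) (h : j < l.length) (b : Bool)
    (hc : (l.take (j+1)).count b = (l.take j).count b + 1) : l.get ⟨j, h⟩ = b := by
  have htk : l.take (j+1) = l.take j ++ [l[j]] := by
    rw [List.take_succ]; simp [List.getElem?_eq_getElem h]
  rw [htk, List.count_append] at hc
  by_contra hne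
  rw [List.get_eq_getElem] at hne
  simp [List.count_singleton', beq_iff_eq, hne] at hc

/-- case (1) of the bijection. If `P = E^a N E^b N Q E^c` is a valid path from
`(0,0)` to `(nr,2n)` with `a+b+c = r` and `E^c` the maximal terminal run of `E`-steps, then
`Q' = Q + (c,0)` (the path `Q` started at `(r,2)`) is valid and begins with at most `r - b`
east steps. -/
theorem case_one_image_valid (r n : ℕ) (hr : 0 < r) (hn : 2 ≤ n)
    (a b c : ℕ) (Q : List Bool) (steps : List Bool)
    (hform : steps = List.replicate a true ++ [false] ++ List.replicate b true ++ [false] ++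
      Q ++ List.replicate c true)
    (habc : a + b + c = r)
    (hlast : Q = [] ∨ Q.getLast? = some false)
    (hpath : IsPathFrom (0, 0) ((n * r : ℤ), (2 * n : ℤ)) steps)
    (hvalid : Valid r 2 (0, 0) steps) :
    Valid r 2 ((r : ℤ), 2) Q ∧ (Q.takeWhile (fun x => x = true)).length ≤ r - b := by
  have hpre : (List.replicate a true ++ [false] ++ List.replicate b true ++ [false]
      : List Bool).length = a + b + 2 := by
    simp; omega
  have hsplit : steps = (List.replicate a true ++ [false] ++ List.replicate b true ++ [false]) ++
      (Q ++ List.replicate c true) := by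
    rw [hform]; simp [List.append_assoc]
  have hSlen : steps.length = a + b + 2 + (Q.length + c) := by
    rw [hsplit, List.length_append, hpre]; simp
  -- take formula for indices inside Q
  have htake : ∀ k, k ≤ Q.length → steps.take (a+b+2+k) =
      (List.replicate a true ++ [false] ++ List.replicate b true ++ [false]) ++ Q.take k := by
    intro k hk
    rw [hsplit, show a+b+2+k = (List.replicate a true ++ [false] ++ List.replicate b true ++
      [false] : List Bool).length + k by rw [hpre], List.take_length_add_append,
      List.take_append_of_le_length hk]
  have htakeb : ∀ k, k ≤ b → steps.take (a+1+k) =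
      List.replicate a true ++ [false] ++ List.replicate k true := by
    intro k hk
    have hassoc : steps = List.replicate a true ++ ([false] ++ (List.replicate b true ++
        ([false] ++ (Q ++ List.replicate c true)))) := by
      rw [hform]; simp [List.append_assoc]
    rw [hassoc,
      show a+1+k = (List.replicate a true : List Bool).length + (1+k) by simp; omega,
      List.take_length_add_append,
      show (1:ℕ)+k = ([false] : List Bool).length + k from by simp,
      List.take_length_add_append,
      List.take_append_of_le_length (by simpa using hk),
      List.take_replicate, inf_eq_left.mpr hk]
    simp [List.append_assoc]
  have hcountT : ∀ k, k ≤ Q.length →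
      (steps.take (a+b+2+k)).count true = a + b + (Q.take k).count true := by
    intro k hk
    rw [htake k hk, List.count_append]
    simp [List.count_append, List.count_replicate]
  have hcountF : ∀ k, k ≤ Q.length →
      (steps.take (a+b+2+k)).count false = 2 + (Q.take k).count false := by
    intro k hk
    rw [htake k hk, List.count_append]
    simp [List.count_append, List.count_replicate]
  -- get inside Q
  have hget : ∀ i (h : i < Q.length) (h2 : a+b+2+i < steps.length),
      steps.get ⟨a+b+2+i, h2⟩ = Q.get ⟨i, h⟩ := by
    intro i h h2
    apply get_eq_of_count
    have h1 : Q.take (i+1) = Q.take i ++ [Q.get ⟨i, h⟩] := by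
      rw [List.take_succ]; simp [List.getElem?_eq_getElem h]
    cases hb : Q.get ⟨i, h⟩ with
    | true =>
      rw [hb] at h1
      rw [show a+b+2+i+1 = a+b+2+(i+1) from rfl, hcountT (i+1) (by omega),
        hcountT i (by omega), h1, List.count_append]
      simp
      omega
    | false =>
      rw [hb] at h1
      rw [show a+b+2+i+1 = a+b+2+(i+1) from rfl, hcountF (i+1) (by omega),
        hcountF i (by omega), h1, List.count_append]
      simp [List.count_singleton']
      omega
  -- endpoint facts
  have hend : pathPoint (0, 0) steps steps.length = ((n * r : ℤ), (2 * n : ℤ)) := hpath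
  rw [pathPoint_eq, List.take_length, Prod.mk.injEq] at hend
  obtain ⟨hcx, hcy⟩ := hend
  have hct : steps.count true = a + b + c + Q.count true := by
    rw [hform]; simp [List.count_append, List.count_replicate]; omega
  have hcf : steps.count false = 2 + Q.count false := by
    rw [hform]; simp [List.count_append, List.count_replicate]; omega
  have hQt : a + b + c + Q.count true = n * r := by
    rw [hct] at hcx; simp only [Prod.fst, zero_add] at hcx; exact_mod_cast hcx
  have hQf : 2 + Q.count false = 2 * n := by
    rw [hcf] at hcy; simp only [Prod.snd, zero_add] at hcy; exact_mod_cast hcy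
  have hQne : Q ≠ [] := by
    intro h; rw [h] at hQf; simp at hQf; omega
  have hlastF : Q.getLast? = some false := hlast.resolve_left hQne
  have hL1 : 1 ≤ Q.length := by
    cases Q with
    | nil => exact absurd rfl hQne
    | cons x l => simp
  have hQlastE : ∀ h : Q.length - 1 < Q.length, Q.get ⟨Q.length - 1, h⟩ = false := by
    intro h
    rw [List.getLast?_eq_getElem?, List.getElem?_eq_getElem h] at hlastF
    simpa [List.get_eq_getElem] using hlastF
  -- takeWhile facts
  set t := (Q.takeWhile (fun x => x = true)).length with ht
  have htpre := List.takeWhile_prefix (l := Q) (fun x => x = true)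
  have htle : t ≤ Q.length := htpre.length_le
  have htw_take : Q.takeWhile (fun x => x = true) = Q.take t := List.prefix_iff_eq_take.mp htpre
  have hQrep : Q.take t = List.replicate t true := by
    rw [← htw_take]
    refine List.eq_replicate_iff.mpr ⟨rfl, ?_⟩
    intro x hx
    simpa using List.mem_takeWhile_imp hx
  have htakerep : ∀ k, k ≤ t → Q.take k = List.replicate k true := by
    intro k hk
    have h2 : Q.take k = (Q.take t).take k := by rw [List.take_take, min_eq_left hk]
    rw [h2, hQrep, List.take_replicate, min_eq_left hk]
  have htlt : t < Q.length := by
    rcases lt_or_eq_of_le htle with h | h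
    · exact h
    · exfalso
      have hc0 : Q.count false = 0 := by
        have e : Q.take t = Q := by rw [h, List.take_length]
        rw [← e, hQrep]
        simp [List.count_replicate]
      omega
  have hQk : ∀ k, k < t → ∀ h : k < Q.length, Q.get ⟨k, h⟩ = true := by
    intro k hk h
    apply get_eq_of_count
    rw [htakerep (k+1) (by omega), htakerep k (by omega)]
    simp [List.count_replicate]
  have hQtf : ∀ h : t < Q.length, Q.get ⟨t, h⟩ = false := by
    intro h
    have := takeWhile_boundary' (fun x => decide (x = true)) Q t h ht
    simpa using this
  constructor
  · -- validity of Q'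
    intro i j hij hi hj hclass htrue
    have hiS : a+b+2+i < steps.length := by omega
    have hjS : a+b+2+j < steps.length := by omega
    have hstep : steps.get ⟨a+b+2+i, hiS⟩ = true := by rw [hget i hi hiS]; exact htrue
    have hcls : ∃ ℓ : ℤ, pathPoint (0,0) steps (a+b+2+j+1) - pathPoint (0,0) steps (a+b+2+i+1)
        = (ℓ * r, ℓ * 2) := by
      obtain ⟨ℓ, hdiff⟩ := hclass
      refine ⟨ℓ, ?_⟩
      rw [pathPoint_eq, pathPoint_eq] at hdiff
      have e1 := hcountT (j+1) (by omega)
      have e2 := hcountT (i+1) (by omega)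
      have e3 := hcountF (j+1) (by omega)
      have e4 := hcountF (i+1) (by omega)
      rw [show a+b+2+j+1 = a+b+2+(j+1) from rfl, show a+b+2+i+1 = a+b+2+(i+1) from rfl,
        pathPoint_eq, pathPoint_eq, e1, e2, e3, e4]
      simp only [Prod.mk_sub_mk, Prod.mk.injEq] at hdiff ⊢
      obtain ⟨h1, h2⟩ := hdiff
      push_cast at h1 h2 ⊢
      constructor <;> linarith
    have happ := hvalid _ _ (by omega) hiS hjS hcls hstep
    rw [← hget j hj hjS]
    exact happ
  · -- the bound on the initial run of east steps
    by_contra hcon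
    push_neg at hcon
    have htge : a + c + 1 ≤ t := by omega
    rcases le_or_gt t r with hA | hB
    · -- case a+c+1 ≤ t ≤ r : one application of validity
      set k := t - (a + c) with hk
      have hk1 : 1 ≤ k := by omega
      have hkb : k ≤ b := by omega
      have hiS : a + k < steps.length := by omega
      have hjS : a+b+2+t < steps.length := by omega
      have hstep_true : steps.get ⟨a + k, hiS⟩ = true := by
        apply get_eq_of_count
        rw [show a+k+1 = a+1+k from by omega, htakeb k hkb,
          show a+k = a+1+(k-1) from by omega, htakeb (k-1) (by omega)]
        simp [List.count_append, List.count_replicate]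
        omega
      have e5 : Q.take (t+1) = List.replicate t true ++ [false] := by
        rw [List.take_succ, List.getElem?_eq_getElem htlt]
        simp only [Option.toList_some]
        rw [htakerep t le_rfl]
        congr 1
        rw [show Q[t] = Q.get ⟨t, htlt⟩ from rfl, hQtf htlt]
      have hclsA : ∃ ℓ : ℤ, pathPoint (0,0) steps (a+b+2+t+1) - pathPoint (0,0) steps (a+k+1)
          = (ℓ * r, ℓ * 2) := by
        refine ⟨1, ?_⟩
        have e1 := hcountT (t+1) (by omega)
        have e2 := hcountF (t+1) (by omega)
        rw [e5] at e1 e2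
        simp [List.count_append, List.count_replicate, List.count_singleton'] at e1 e2
        rw [show a+b+2+t+1 = a+b+2+(t+1) from rfl, show a+k+1 = a+1+k from by omega,
          pathPoint_eq, pathPoint_eq, e1, e2, htakeb k hkb]
        simp only [Prod.mk_sub_mk, Prod.mk.injEq, List.count_append, List.count_replicate]
        constructor <;> push_cast <;> simp <;> omega
      have happ := hvalid (a+k) (a+b+2+t) (by omega) hiS hjS hclsA hstep_true
      have hgf : steps.get ⟨a+b+2+t, hjS⟩ = false := by
        rw [hget t htlt hjS]; exact hQtf htlt
      rw [hgf] at happ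
      exact Bool.noConfusion happ
    · -- case t > r : induction over the N-steps entering even levels
      have hcount2 : (steps.take (a+b+2+t)).count false = 2 := by
        rw [hcountF t (le_of_lt htlt), htakerep t le_rfl]
        simp [List.count_replicate]
      have hcountt : (steps.take (a+b+2+t)).count true = a + b + t := by
        rw [hcountT t (le_of_lt htlt), htakerep t le_rfl]
        simp [List.count_replicate]
      have key : ∀ j, ∀ hj : j < steps.length, a+b+2+t ≤ j → steps.get ⟨j, hj⟩ = false →
          ∀ m : ℕ, 2 ≤ m → (steps.take j).count false + 1 = 2*m →
          a + b + t + (m-1)*r < (steps.take j).count true := by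
        intro j
        induction j using Nat.strong_induction_on with
        | _ j IH =>
        intro hj hjt hgetj m hm hcf2
        have hxlb : a + b + t ≤ (steps.take j).count true := by
          rw [← hcountt]; exact count_take_mono steps true hjt
        have hdich : ∀ e : ℕ, 1 ≤ e → e ≤ t →
            (steps.take j).count true = a + b + e + (m-1)*r → False := by
          intro e he1 he2 hxe
          have hiQ : e - 1 < Q.length := by omega
          have hiS : a+b+2+(e-1) < steps.length := by omega
          have hst : steps.get ⟨a+b+2+(e-1), hiS⟩ = true := by
            rw [hget (e-1) hiQ hiS]; exact hQk (e-1) (by omega) hiQ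
          have hij : a+b+2+(e-1) < j := by omega
          have hcls : ∃ ℓ : ℤ, pathPoint (0,0) steps (j+1) -
              pathPoint (0,0) steps (a+b+2+(e-1)+1) = (ℓ * r, ℓ * 2) := by
            refine ⟨((m-1 : ℕ) : ℤ), ?_⟩
            have hjtk : steps.take (j+1) = steps.take j ++ [false] := by
              rw [List.take_succ, List.getElem?_eq_getElem hj]
              simp only [Option.toList_some]
              congr 1
              rw [show steps[j] = steps.get ⟨j, hj⟩ from rfl, hgetj]
            have hctj : (steps.take (j+1)).count true = (steps.take j).count true := by
              rw [hjtk, List.count_append]; simp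
            have hcfj : (steps.take (j+1)).count false = 2*m := by
              rw [hjtk, List.count_append]
              simp [List.count_singleton']
              omega
            have hcte := hcountT e (by omega)
            have hcfe := hcountF e (by omega)
            rw [htakerep e he2] at hcte hcfe
            simp [List.count_replicate] at hcte hcfe
            rw [show a+b+2+(e-1)+1 = a+b+2+e from by omega,
              pathPoint_eq, pathPoint_eq, hctj, hcfj, hcte, hcfe]
            simp only [Prod.mk_sub_mk, Prod.mk.injEq]
            constructor
            · rw [hxe]; push_cast; ring
            · omega
          have happ := hvalid _ j hij hiS hj hcls hst
          rw [hgetj] at happ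
          exact Bool.noConfusion happ
        have hxgt : a + b + (m-1)*r < (steps.take j).count true := by
          rcases eq_or_lt_of_le hm with h2 | h3
          · rw [← h2]
            simp only [show (2-1 : ℕ) = 1 from rfl, one_mul]
            omega
          · obtain ⟨kk, hk1, hk2, hkS, hkF, hkc⟩ :=
              exists_false_crossing steps false (a+b+2+t) (2*(m-1)) j hjt (le_of_lt hj)
                (by rw [hcount2]; omega) (by omega)
            have hIH := IH kk hk2 hkS hk1 hkF (m-1) (by omega) hkc
            have hmono : (steps.take kk).count true ≤ (steps.take j).count true :=
              count_take_mono steps true (le_of_lt hk2)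
            rw [show m-1-1 = m-2 from by omega] at hIH
            rw [show (m-1)*r = (m-2)*r + r from by rw [show m-1 = (m-2)+1 from by omega,
              Nat.succ_mul]]
            generalize hz : (m-2)*r = z at hIH ⊢
            omega
        by_contra hcon2
        push_neg at hcon2
        obtain ⟨e, he1, he2, he3⟩ :
            ∃ e, 1 ≤ e ∧ e ≤ t ∧ (steps.take j).count true = a+b+e+(m-1)*r := by
          generalize hz : (m-1)*r = z at hxgt hcon2 ⊢
          exact ⟨(steps.take j).count true - z - (a+b), by omega, by omega, by omega⟩
        exact hdich e he1 he2 he3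
      -- apply at the last step of Q
      have hjS : a+b+2+(Q.length-1) < steps.length := by omega
      have hjt : a+b+2+t ≤ a+b+2+(Q.length-1) := by omega
      have hgl : steps.get ⟨a+b+2+(Q.length-1), hjS⟩ = false := by
        rw [hget (Q.length-1) (by omega) hjS]; exact hQlastE (by omega)
      have hQsplit : Q.take (Q.length-1) ++ [false] = Q := by
        have e : Q.take (Q.length-1+1) = Q.take (Q.length-1) ++ [false] := by
          rw [List.take_succ, List.getElem?_eq_getElem (by omega : Q.length-1 < Q.length)]
          simp only [Option.toList_some]
          congr 1
          rw [show Q[Q.length-1] = Q.get ⟨Q.length-1, by omega⟩ from rfl, hQlastE (by omega)]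
        rw [← e, show Q.length-1+1 = Q.length from by omega, List.take_length]
      have hcfinal : (steps.take (a+b+2+(Q.length-1))).count false + 1 = 2*n := by
        rw [hcountF (Q.length-1) (by omega)]
        have e : Q.count false = (Q.take (Q.length-1)).count false + 1 := by
          conv_lhs => rw [← hQsplit]
          rw [List.count_append]
          simp [List.count_singleton']
        omega
      have hfin := key _ hjS hjt hgl n hn hcfinal
      have hctfinal : (steps.take (a+b+2+(Q.length-1))).count true = a + b + Q.count true := by
        rw [hcountT (Q.length-1) (by omega)]
        have e : Q.count true = (Q.take (Q.length-1)).count true := by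
          conv_lhs => rw [← hQsplit]
          rw [List.count_append]
          simp
        omega
      rw [hctfinal] at hfin
      have hnr : (n-1)*r + r = n*r := by
        rw [← Nat.succ_mul]
        congr 1
        omega
      generalize hz : (n-1)*r = z at hfin hnr
      generalize hw : n*r = w at hnr hQt
      omega
end

section
/- Let s = 2 and n ≥ 2. The map sending P = E^a N E^b N Q E^c (with a+b+c = r, terminal E-run of length c) to the pair (E^a N E^b N E^c, Q + (c,0)), and sending P = E^a N E^b N R E^{r+1} N E^c (with a+b+c < r) to the pair (E^a N E^{r-a-c} N E^c, E^{a+b+c+1} N (R + (c+r+1,1))), is injective on the set of valid paths from (0,0) to (nr,2n). -/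
/-- The pair `(P', Q')` of step lists produced by the bijection `φ` from a valid path with
step list `steps`, in either of the two cases of the construction.  Here `E^a N E^b N` is the
prefix of the path up to its second `N`-step and `E^c` is the terminal run of `E`-steps. -/
def ImageOf (r : ℕ) (steps : List Bool) (out : List Bool × List Bool) : Prop :=
  (∃ a b c : ℕ, ∃ Q : List Bool,
      steps = List.replicate a true ++ [false] ++ List.replicate b true ++ [false] ++
        Q ++ List.replicate c true ∧
      a + b + c = r ∧ (Q = [] ∨ Q.getLast? = some false) ∧
      out = (List.replicate a true ++ [false] ++ List.replicate b true ++ [false] ++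
        List.replicate c true, Q)) ∨
  (∃ a b c : ℕ, ∃ R : List Bool,
      steps = List.replicate a true ++ [false] ++ List.replicate b true ++ [false] ++
        R ++ List.replicate (r + 1) true ++ [false] ++ List.replicate c true ∧
      a + b + c < r ∧
      out = (List.replicate a true ++ [false] ++ List.replicate (r - a - c) true ++ [false] ++
        List.replicate c true,
        List.replicate (a + b + c + 1) true ++ [false] ++ R))

lemma sumVec (L : List Bool) : (L.map stepVec).sum = ((L.count true : ℤ), (L.count false : ℤ)) := by
  induction L with
  | nil => simp; rfl
  | cons x xs ih =>
    cases x <;> simp [stepVec, ih, List.count_cons, Prod.ext_iff] <;> ring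

lemma pathPoint_zero (s : ℤ×ℤ) (L : List Bool) : pathPoint s L 0 = s := by simp [pathPoint]

lemma pathPoint_append (s : ℤ×ℤ) (xs ys : List Bool) (i : ℕ) :
    pathPoint s (xs ++ ys) (xs.length + i) = pathPoint (pathPoint s xs xs.length) ys i := by
  simp [pathPoint, List.take_append, add_assoc,
    List.take_of_length_le (by simp : (List.map stepVec xs).length ≤ xs.length + i),
    List.take_of_length_le (le_refl xs.length)]

lemma pathPoint_EN (s : ℤ×ℤ) (a : ℕ) :
    pathPoint s (List.replicate a true ++ [false]) (a + 1) = s + ((a : ℤ), 1) := by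
  have h : (List.replicate a true ++ [false]).length = a + 1 := by simp
  rw [pathPoint, ← h, List.take_length, sumVec]
  simp [List.count_replicate]

lemma pathPoint_repl (s : ℤ×ℤ) (b : ℕ) (ys : List Bool) (m : ℕ) (h : m ≤ b) :
    pathPoint s (List.replicate b true ++ ys) m = s + ((m : ℤ), 0) := by
  rw [pathPoint, List.take_append_of_le_length (by simpa using h), List.take_replicate,
    min_eq_left h, sumVec]
  simp [List.count_replicate]

lemma pathPoint_step (s : ℤ×ℤ) (L : List Bool) (i : ℕ) (h : i < L.length) :
    pathPoint s L (i + 1) = pathPoint s L i + stepVec L[i] := by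
  rw [pathPoint, pathPoint, List.take_succ, List.getElem?_eq_getElem h, List.map_append,
    List.sum_append, add_assoc]
  simp

lemma pp_EN_block (s : ℤ×ℤ) (a : ℕ) (ys : List Bool) (i : ℕ) :
    pathPoint s ((List.replicate a true ++ [false]) ++ ys) ((a + 1) + i)
      = pathPoint (s + ((a : ℤ), 1)) ys i := by
  have h := pathPoint_append s (List.replicate a true ++ [false]) ys i
  simp only [List.length_append, List.length_replicate, List.length_singleton] at h
  rw [h]
  congr 1
  exact pathPoint_EN s a

lemma repl_cons_inj : ∀ (a a' : ℕ) (L L' : List Bool),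
    List.replicate a true ++ false :: L = List.replicate a' true ++ false :: L' → a = a' ∧ L = L' := by
  intro a
  induction a with
  | zero =>
    intro a' L L' h
    cases a' with
    | zero => simpa using h
    | succ m => simp [List.replicate_succ] at h
  | succ n ih =>
    intro a' L L' h
    cases a' with
    | zero => simp [List.replicate_succ] at h
    | succ m =>
      simp only [List.replicate_succ, List.cons_append, List.cons.injEq] at h
      obtain ⟨h1, h2⟩ := ih m L L' h.2
      exact ⟨by omega, h2⟩

lemma mixed_false (r : ℕ) (steps tail : List Bool)
    (hvalid : Valid r 2 (0, 0) steps) (a b k : ℕ)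
    (hs : steps = List.replicate a true ++ false :: (List.replicate b true ++ false ::
      (List.replicate k true ++ false :: tail)))
    (h1 : r < b + k) (h2 : k ≤ r) : False := by
  have hs' : steps = (List.replicate a true ++ [false]) ++ ((List.replicate b true ++ [false]) ++
      ((List.replicate k true ++ [false]) ++ tail)) := by rw [hs]; simp
  set m' : ℕ := b + k - r - 1 with hm'
  have hm'b : m' + 1 ≤ b := by omega
  have hlen : steps.length = (a + 1) + ((b + 1) + ((k + 1) + tail.length)) := by
    rw [hs']; simp; omega
  set i : ℕ := (a + 1) + m' with hi_def
  set j : ℕ := (a + 1) + ((b + 1) + k) with hj_def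
  have hi : i < steps.length := by omega
  have hj : j < steps.length := by omega
  -- pathPoint values
  have e0 : pathPoint (0, 0) steps i = (((a : ℤ) + m'), 1) := by
    rw [hs', hi_def, pp_EN_block, List.append_assoc,
      pathPoint_repl _ _ _ _ (le_of_lt (by omega : m' < b))]
    simp [Prod.ext_iff]
  have e1 : pathPoint (0, 0) steps (i + 1) = (((a : ℤ) + m' + 1), 1) := by
    rw [show i + 1 = (a + 1) + (m' + 1) from rfl, hs', pp_EN_block, List.append_assoc,
      pathPoint_repl _ _ _ _ hm'b]
    simp [Prod.ext_iff] <;> push_cast <;> omega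
  have e2 : pathPoint (0, 0) steps j = (((a : ℤ) + b + k), 2) := by
    rw [hs', hj_def, pp_EN_block, pp_EN_block, List.append_assoc,
      pathPoint_repl _ _ _ _ (le_refl k)]
    simp [Prod.ext_iff] <;> push_cast <;> omega
  have e3 : pathPoint (0, 0) steps (j + 1) = (((a : ℤ) + b + k), 3) := by
    rw [show j + 1 = (a + 1) + ((b + 1) + ((k + 1) + 0)) from rfl, hs', pp_EN_block, pp_EN_block,
      pp_EN_block, pathPoint_zero]
    simp [Prod.ext_iff] <;> push_cast <;> omega
  -- the step at i is E
  have hgi : steps[i] = true := by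
    have h := pathPoint_step (0, 0) steps i hi
    rw [e0, e1] at h
    cases hb : steps[i] with
    | true => rfl
    | false =>
      rw [hb] at h
      have h2 := congrArg Prod.snd h
      simp [stepVec] at h2
  -- the step at j is N
  have hgj : steps[j] = false := by
    have h := pathPoint_step (0, 0) steps j hj
    rw [e2, e3] at h
    cases hb : steps[j] with
    | false => rfl
    | true =>
      rw [hb] at h
      have h2 := congrArg Prod.snd h
      simp [stepVec] at h2
  have key := hvalid i j (by omega) hi hj ⟨1, by
    rw [e1, e3]
    simp [Prod.ext_iff] <;> push_cast <;> omega⟩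
    (by simpa [List.get_eq_getElem] using hgi)
  rw [List.get_eq_getElem, hgj] at key
  exact Bool.false_ne_true key

/-- In a mixed situation (path decomposes as case 1, but the output pair has the shape of
case 2), validity is violated. -/
lemma no_mixed (r : ℕ) (steps : List Bool) (hvalid : Valid r 2 (0, 0) steps)
    (a b c : ℕ) (Q : List Bool)
    (hs : steps = List.replicate a true ++ [false] ++ List.replicate b true ++ [false] ++
        Q ++ List.replicate c true)
    (habc : a + b + c = r)
    (a₂ b₂ c₂ : ℕ) (R : List Bool)
    (hX : List.replicate a true ++ [false] ++ List.replicate b true ++ [false] ++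
        List.replicate c true
      = List.replicate a₂ true ++ [false] ++ List.replicate (r - a₂ - c₂) true ++ [false] ++
        List.replicate c₂ true)
    (hQ : Q = List.replicate (a₂ + b₂ + c₂ + 1) true ++ [false] ++ R)
    (hlt : a₂ + b₂ + c₂ < r) : False := by
  simp only [List.append_assoc, List.singleton_append] at hX
  obtain ⟨ha, hX2⟩ := repl_cons_inj _ _ _ _ hX
  obtain ⟨hb, hX3⟩ := repl_cons_inj _ _ _ _ hX2
  have hc : c = c₂ := by simpa using congrArg List.length hX3
  have hs' : steps = List.replicate a true ++ false :: (List.replicate b true ++ false ::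
      (List.replicate (a₂ + b₂ + c₂ + 1) true ++ false :: (R ++ List.replicate c true))) := by
    rw [hs, hQ]; simp
  exact mixed_false r steps (R ++ List.replicate c true) hvalid a b (a₂ + b₂ + c₂ + 1) hs'
    (by omega) (by omega)

/-- the map `φ` is injective on valid paths from `(0,0)` to `(nr,2n)`. -/
theorem phi_injective (r n : ℕ) (hr : 0 < r) (hn : 2 ≤ n)
    (steps₁ steps₂ : List Bool) (out : List Bool × List Bool)
    (hpath₁ : IsPathFrom (0, 0) ((n * r : ℤ), (2 * n : ℤ)) steps₁)
    (hvalid₁ : Valid r 2 (0, 0) steps₁)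
    (hpath₂ : IsPathFrom (0, 0) ((n * r : ℤ), (2 * n : ℤ)) steps₂)
    (hvalid₂ : Valid r 2 (0, 0) steps₂)
    (h₁ : ImageOf r steps₁ out) (h₂ : ImageOf r steps₂ out) :
    steps₁ = steps₂ := by
  obtain h₁ | h₁ := h₁ <;> obtain h₂ | h₂ := h₂
  · -- case 1 / case 1
    obtain ⟨a, b, c, Q, hs, habc, hQl, hout⟩ := h₁
    obtain ⟨a', b', c', Q', hs', habc', hQl', hout'⟩ := h₂
    rw [hout] at hout'
    injection hout' with hX hQQ
    simp only [List.append_assoc, List.singleton_append] at hX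
    obtain ⟨ha, hX2⟩ := repl_cons_inj _ _ _ _ hX
    obtain ⟨hb, hX3⟩ := repl_cons_inj _ _ _ _ hX2
    rw [hs, hs', ha, hb, hX3, hQQ]
  · -- case 1 / case 2 : contradiction
    obtain ⟨a, b, c, Q, hs, habc, hQl, hout⟩ := h₁
    obtain ⟨a', b', c', R, hs', hlt', hout'⟩ := h₂
    rw [hout] at hout'
    injection hout' with hX hQQ
    exact (no_mixed r steps₁ hvalid₁ a b c Q hs habc a' b' c' R hX hQQ hlt').elim
  · -- case 2 / case 1 : contradiction
    obtain ⟨a, b, c, R, hs, hlt, hout⟩ := h₁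
    obtain ⟨a', b', c', Q', hs', habc', hQl', hout'⟩ := h₂
    rw [hout] at hout'
    injection hout' with hX hQQ
    exact (no_mixed r steps₂ hvalid₂ a' b' c' Q' hs' habc' a b c R hX.symm hQQ.symm hlt).elim
  · -- case 2 / case 2
    obtain ⟨a, b, c, R, hs, hlt, hout⟩ := h₁
    obtain ⟨a', b', c', R', hs', hlt', hout'⟩ := h₂
    rw [hout] at hout'
    injection hout' with hX hQQ
    simp only [List.append_assoc, List.singleton_append] at hX hQQ
    obtain ⟨ha, hX2⟩ := repl_cons_inj _ _ _ _ hX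
    obtain ⟨hmid, hX3⟩ := repl_cons_inj _ _ _ _ hX2
    have hc : c = c' := by simpa using congrArg List.length hX3
    obtain ⟨hsum, hRR⟩ := repl_cons_inj _ _ _ _ hQQ
    have hb : b = b' := by omega
    rw [hs, hs', ha, hb, hc, hRR]
end
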